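/- Let 𝔤 be a 3-dimensional real Lie algebra with a positive definite symmetric bilinear form B. If (J₊,J₋,X₊,X₋,H,F) is a B₃-Kähler datum on (𝔤,B), then H = 0, F = 0, and one of the following holds: (1) 𝔤 is abelian; (2) there exist a B-orthonormal basis (w₁,w₂,w₃) of 𝔤 and λ ≠ 0 such that [w₁,w₂] = λw₃, [w₂,w₃] = λw₁, [w₃,w₁] = 0, X₋ = w₂ and X₊ = ±w₂; (3) there exist a B-orthogonal basis (w₁,w₂,w₃) of 𝔤 and δ ≠ 0 with B(w₁,w₁) = 1/δ², B(w₂,w₂) = B(w₃,w₃) = 1, [w₁,w₂] = w₂, [w₁,w₃] = [w₂,w₃] = 0, X₋ = w₃ and X₊ = ±w₃. -/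

import Mathlib

set_option maxHeartbeats 4000000 in
set_option maxRecDepth 8000 in
/-- Corollary 6.5: on a 3-dimensional Lie algebra `𝔤` with positive definite `B`, any
`B₃`-Kähler datum has `H = 0`, `F = 0` and one of: (1) `𝔤` abelian; (2) an orthonormal
basis with `[w₁,w₂] = λw₃`, `[w₂,w₃] = λw₁`, `[w₃,w₁] = 0` (`λ ≠ 0`), `X₋ = w₂`,
`X₊ = ±w₂`; (3) an orthogonal basis with `B(w₁,w₁) = 1/δ²`, `B(w₂,w₂) = B(w₃,w₃) = 1`,
`[w₁,w₂] = w₂`, `[w₁,w₃] = [w₂,w₃] = 0`, `X₋ = w₃`, `X₊ = ±w₃`. -/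
theorem stmt_10 {𝔤 : Type*} [LieRing 𝔤] [LieAlgebra ℝ 𝔤] [FiniteDimensional ℝ 𝔤]
    (hdim : Module.finrank ℝ 𝔤 = 3)
    (B : LinearMap.BilinForm ℝ 𝔤)
    (hBsymm : ∀ x y, B x y = B y x)
    (hBpos : ∀ x : 𝔤, x ≠ 0 → 0 < B x x)
    -- Levi-Civita product
    (N : 𝔤 → 𝔤 → 𝔤)
    (hK : ∀ x y z, 2 * B (N x y) z = B ⁅x, y⁆ z - B ⁅y, z⁆ x + B ⁅z, x⁆ y)
    -- B₃-Kähler datum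
    (Jp Jm : 𝔤 →ₗ[ℝ] 𝔤) (Xp Xm : 𝔤)
    (hJpskew : ∀ x y, B (Jp x) y = - B x (Jp y))
    (hJmskew : ∀ x y, B (Jm x) y = - B x (Jm y))
    (hXp : B Xp Xp = 1) (hXm : B Xm Xm = 1)
    (hJpXp : Jp Xp = 0) (hJmXm : Jm Xm = 0)
    (hJp2 : ∀ x, Jp (Jp x) = -x + B x Xp • Xp)
    (hJm2 : ∀ x, Jm (Jm x) = -x + B x Xm • Xm)
    (H : AlternatingMap ℝ 𝔤 ℝ (Fin 3)) (F : AlternatingMap ℝ 𝔤 ℝ (Fin 2))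
    (hdF : ∀ x y z : 𝔤, -F ![⁅x, y⁆, z] + F ![⁅x, z⁆, y] - F ![⁅y, z⁆, x] = 0)
    (hFXm : ∀ y : 𝔤, F ![Xm, y] = 0)
    (Hs : 𝔤 → 𝔤 → 𝔤) (hHs : ∀ x y z, B (Hs x y) z = H ![x, y, z])
    (Fs : 𝔤 → 𝔤) (hFs : ∀ x y, B (Fs x) y = F ![x, y])
    (hNXm : ∀ x, N x Xm = (-(1 / 2 : ℝ)) • Hs x Xm)
    (hNXp : ∀ x, N x Xp = (-(1 / 2 : ℝ)) • Hs Xp x - Jp (Fs x)) :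
    H = 0 ∧ F = 0 ∧
    ((∀ x y : 𝔤, ⁅x, y⁆ = 0) ∨
      (∃ (w : Module.Basis (Fin 3) ℝ 𝔤) (l : ℝ), l ≠ 0 ∧
        (∀ i j, i ≠ j → B (w i) (w j) = 0) ∧
        (∀ i, B (w i) (w i) = 1) ∧
        ⁅w 0, w 1⁆ = l • w 2 ∧ ⁅w 1, w 2⁆ = l • w 0 ∧ ⁅w 2, w 0⁆ = 0 ∧
        Xm = w 1 ∧ (Xp = w 1 ∨ Xp = -w 1)) ∨
      (∃ (w : Module.Basis (Fin 3) ℝ 𝔤) (δ : ℝ), δ ≠ 0 ∧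
        (∀ i j, i ≠ j → B (w i) (w j) = 0) ∧
        B (w 0) (w 0) = 1 / δ ^ 2 ∧ B (w 1) (w 1) = 1 ∧ B (w 2) (w 2) = 1 ∧
        ⁅w 0, w 1⁆ = w 1 ∧ ⁅w 0, w 2⁆ = 0 ∧ ⁅w 1, w 2⁆ = 0 ∧
        Xm = w 2 ∧ (Xp = w 2 ∨ Xp = -w 2))) := by
  classical
  have hB0 : ∀ x : 𝔤, B x x = 0 → x = 0 := by
    intro x hx
    by_contra hne
    exact absurd hx (ne_of_gt (hBpos x hne))
  have hXmne : Xm ≠ 0 := by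
    intro hh; rw [hh] at hXm; simp at hXm
  -- a vector outside the span of Xm
  obtain ⟨y, hy⟩ : ∃ y : 𝔤, y ∉ Submodule.span ℝ {Xm} := by
    by_contra hcon
    push_neg at hcon
    have htop : Submodule.span ℝ {Xm} = ⊤ := Submodule.eq_top_iff'.mpr hcon
    have h1 : Module.finrank ℝ (Submodule.span ℝ {Xm}) = 1 := finrank_span_singleton hXmne
    rw [htop, finrank_top] at h1
    rw [hdim] at h1; exact absurd h1 (by norm_num)
  have hJmy : Jm y ≠ 0 := by
    intro hh
    have h2 := hJm2 y
    rw [hh, map_zero] at h2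
    have h3 : y = B y Xm • Xm := neg_add_eq_zero.mp h2.symm
    exact hy (Submodule.mem_span_singleton.mpr ⟨B y Xm, h3.symm⟩)
  obtain ⟨n, hn⟩ : ∃ t : ℝ, t = Real.sqrt (B (Jm y) (Jm y)) := ⟨_, rfl⟩
  have hpos : 0 < B (Jm y) (Jm y) := hBpos _ hJmy
  have hnpos : 0 < n := hn ▸ Real.sqrt_pos.mpr hpos
  have hn2 : n ^ 2 = B (Jm y) (Jm y) := hn ▸ Real.sq_sqrt hpos.le
  obtain ⟨e1, he1⟩ : ∃ v : 𝔤, v = n⁻¹ • Jm y := ⟨_, rfl⟩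
  obtain ⟨e2, he2⟩ : ∃ v : 𝔤, v = Jm e1 := ⟨_, rfl⟩
  have o13 : B e1 Xm = 0 := by
    rw [he1]; simp only [map_smul, LinearMap.smul_apply, smul_eq_mul]
    rw [hJmskew, hJmXm]; simp
  have o11 : B e1 e1 = 1 := by
    rw [he1]; simp only [map_smul, LinearMap.smul_apply, smul_eq_mul]
    rw [← hn2]; field_simp
  have o12 : B e1 e2 = 0 := by
    have h1 := hJmskew e1 e1
    have h2 := hBsymm e1 (Jm e1)
    rw [he2]; linarith
  have o22 : B e2 e2 = 1 := by
    have h1 := hJmskew e1 e2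
    have h2 : B e1 (Jm e2) = B e1 (-e1 + B e1 Xm • Xm) := by rw [he2, hJm2]
    rw [o13] at h2
    simp only [map_add, map_neg, map_smul, smul_eq_mul, zero_mul, zero_smul, add_zero] at h2
    rw [o11] at h2
    rw [← he2] at h1
    linarith [h1, h2]
  have o23 : B e2 Xm = 0 := by
    rw [he2, hJmskew, hJmXm]; simp
  have o21 : B e2 e1 = 0 := by rw [hBsymm]; exact o12
  have o31 : B Xm e1 = 0 := by rw [hBsymm]; exact o13
  have o32 : B Xm e2 = 0 := by rw [hBsymm]; exact o23
  -- linear independence of B-orthogonal families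
  have hli : ∀ v : Fin 3 → 𝔤, (∀ i j, i ≠ j → B (v i) (v j) = 0) →
      (∀ i, B (v i) (v i) ≠ 0) → LinearIndependent ℝ v := by
    intro v horth hnz
    rw [Fintype.linearIndependent_iff]
    intro g hg i
    have h0 : B (∑ j, g j • v j) (v i) = 0 := by rw [hg]; simp
    rw [map_sum] at h0
    simp only [LinearMap.coe_sum, Finset.sum_apply, map_smul, LinearMap.smul_apply,
      smul_eq_mul] at h0
    rw [Finset.sum_eq_single i] at h0
    · exact (mul_eq_zero.mp h0).resolve_right (hnz i)
    · intro j _ hji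
      rw [horth j i hji, mul_zero]
    · intro hmem; exact absurd (Finset.mem_univ i) hmem
  have hliE : LinearIndependent ℝ ![e1, e2, Xm] := by
    apply hli
    · intro i j hij
      fin_cases i <;> fin_cases j <;>
        first
          | exact absurd rfl hij
          | exact o12 | exact o13 | exact o21 | exact o23 | exact o31 | exact o32
    · intro i
      fin_cases i
      · exact show B e1 e1 ≠ 0 by rw [o11]; norm_num
      · exact show B e2 e2 ≠ 0 by rw [o22]; norm_num
      · exact show B Xm Xm ≠ 0 by rw [hXm]; norm_num
  have hcard : Fintype.card (Fin 3) = Module.finrank ℝ 𝔤 := by simp [hdim]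
  obtain ⟨bE, hbEdef⟩ : ∃ w : Module.Basis (Fin 3) ℝ 𝔤, w = basisOfLinearIndependentOfCardEqFinrank hliE hcard := ⟨_, rfl⟩
  have hbE : ⇑bE = ![e1, e2, Xm] := by
    rw [hbEdef]; exact coe_basisOfLinearIndependentOfCardEqFinrank _ _
  have hbE0 : bE 0 = e1 := by rw [hbE]; rfl
  have hbE1 : bE 1 = e2 := by rw [hbE]; rfl
  have hbE2 : bE 2 = Xm := by rw [hbE]; rfl
  -- separation
  have hsep : ∀ z : 𝔤, B z e1 = 0 → B z e2 = 0 → B z Xm = 0 → z = 0 := by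
    intro z h1 h2 h3
    apply hB0
    have hz : B z z = B z (∑ i, bE.repr z i • bE i) := by rw [bE.sum_repr]
    rw [map_sum] at hz
    simp only [map_smul, smul_eq_mul] at hz
    rw [Fin.sum_univ_three, hbE0, hbE1, hbE2, h1, h2, h3] at hz
    simpa using hz
  -- expansion in the orthonormal basis
  have hexp : ∀ x : 𝔤, x = B x e1 • e1 + B x e2 • e2 + B x Xm • Xm := by
    intro x
    have h1 : B (x - (B x e1 • e1 + B x e2 • e2 + B x Xm • Xm)) e1 = 0 := by
      simp only [map_sub, map_add, map_smul, LinearMap.sub_apply, LinearMap.add_apply,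
        LinearMap.smul_apply, smul_eq_mul, o11, o21, o31]
      ring
    have h2 : B (x - (B x e1 • e1 + B x e2 • e2 + B x Xm • Xm)) e2 = 0 := by
      simp only [map_sub, map_add, map_smul, LinearMap.sub_apply, LinearMap.add_apply,
        LinearMap.smul_apply, smul_eq_mul, o12, o22, o32]
      ring
    have h3 : B (x - (B x e1 • e1 + B x e2 • e2 + B x Xm • Xm)) Xm = 0 := by
      simp only [map_sub, map_add, map_smul, LinearMap.sub_apply, LinearMap.add_apply,
        LinearMap.smul_apply, smul_eq_mul, o13, o23, hXm]
      ring
    exact sub_eq_zero.mp (hsep _ h1 h2 h3)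
  -- alternating map helpers
  have Hrep01 : ∀ x z : 𝔤, H ![x, x, z] = 0 := fun x z =>
    H.map_eq_zero_of_eq _ (show (![x, x, z]) 0 = (![x, x, z]) 1 from rfl) (by decide)
  have Hrep02 : ∀ x z : 𝔤, H ![x, z, x] = 0 := fun x z =>
    H.map_eq_zero_of_eq _ (show (![x, z, x]) 0 = (![x, z, x]) 2 from rfl) (by decide)
  have Hrep12 : ∀ x z : 𝔤, H ![z, x, x] = 0 := fun x z =>
    H.map_eq_zero_of_eq _ (show (![z, x, x]) 1 = (![z, x, x]) 2 from rfl) (by decide)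
  have Hsw01 : ∀ x y z : 𝔤, H ![y, x, z] = -H ![x, y, z] := by
    intro x y z
    have h := H.map_swap (v := ![x, y, z]) (show (0 : Fin 3) ≠ 1 by decide)
    have e : ![x, y, z] ∘ Equiv.swap (0 : Fin 3) 1 = ![y, x, z] := by
      funext i; fin_cases i <;> simp [Equiv.swap_apply_def]
    rw [e] at h; exact h
  have Hsw12 : ∀ x y z : 𝔤, H ![x, z, y] = -H ![x, y, z] := by
    intro x y z
    have h := H.map_swap (v := ![x, y, z]) (show (1 : Fin 3) ≠ 2 by decide)
    have e : ![x, y, z] ∘ Equiv.swap (1 : Fin 3) 2 = ![x, z, y] := by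
      funext i; fin_cases i <;> simp [Equiv.swap_apply_def]
    rw [e] at h; exact h
  have Fsw : ∀ x y : 𝔤, F ![y, x] = -F ![x, y] := by
    intro x y
    have h := F.map_swap (v := ![x, y]) (show (0 : Fin 2) ≠ 1 by decide)
    have e : ![x, y] ∘ Equiv.swap (0 : Fin 2) 1 = ![y, x] := by
      funext i; fin_cases i <;> simp [Equiv.swap_apply_def]
    rw [e] at h; exact h
  have Hadd : ∀ x y u v : 𝔤, H ![x + y, u, v] = H ![x, u, v] + H ![y, u, v] := by
    intro x y u v
    have h1 := H.toMultilinearMap.cons_add ![u, v] x y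
    simp only [AlternatingMap.coe_multilinearMap] at h1
    exact h1
  have Hsmul : ∀ (t : ℝ) (x u v : 𝔤), H ![t • x, u, v] = t * H ![x, u, v] := by
    intro t x u v
    have h1 := H.toMultilinearMap.cons_smul ![u, v] t x
    simp only [AlternatingMap.coe_multilinearMap, smul_eq_mul] at h1
    exact h1
  have brskew : ∀ x z : 𝔤, ⁅x, z⁆ = -⁅z, x⁆ := fun x z => by rw [← lie_skew]
  -- master equations
  have master_m : ∀ x z : 𝔤,
      B ⁅x, Xm⁆ z - B ⁅Xm, z⁆ x + B ⁅z, x⁆ Xm = -H ![x, Xm, z] := by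
    intro x z
    have h1 := hK x Xm z
    rw [hNXm x, map_smul, LinearMap.smul_apply, smul_eq_mul, hHs] at h1
    linarith
  have master_p : ∀ x z : 𝔤,
      B ⁅x, Xp⁆ z - B ⁅Xp, z⁆ x + B ⁅z, x⁆ Xp = -H ![Xp, x, z] - 2 * B (Jp (Fs x)) z := by
    intro x z
    have h1 := hK x Xp z
    rw [hNXp x, map_sub, LinearMap.sub_apply, map_smul, LinearMap.smul_apply, smul_eq_mul,
      hHs] at h1
    linarith
  -- structure constants
  obtain ⟨a, ha⟩ : ∃ t : ℝ, B ⁅e1, e2⁆ e1 = t := ⟨_, rfl⟩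
  obtain ⟨b, hb⟩ : ∃ t : ℝ, B ⁅e1, e2⁆ e2 = t := ⟨_, rfl⟩
  obtain ⟨q, hq⟩ : ∃ t : ℝ, B ⁅e1, Xm⁆ e2 = t := ⟨_, rfl⟩
  obtain ⟨hh, hH123⟩ : ∃ t : ℝ, H ![e1, e2, Xm] = t := ⟨_, rfl⟩
  obtain ⟨f, hf⟩ : ∃ t : ℝ, F ![e1, e2] = t := ⟨_, rfl⟩
  have hp0 : B ⁅e1, Xm⁆ e1 = 0 := by
    have h1 := master_m e1 e1
    rw [brskew Xm e1, lie_self] at h1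
    simp only [map_neg, LinearMap.neg_apply, map_zero, LinearMap.zero_apply, Hrep02] at h1
    linarith
  have hr0 : B ⁅e1, Xm⁆ Xm = 0 := by
    have h1 := master_m Xm e1
    rw [brskew Xm e1, lie_self] at h1
    simp only [map_neg, LinearMap.neg_apply, map_zero, LinearMap.zero_apply, Hrep01] at h1
    linarith
  have ht0 : B ⁅e2, Xm⁆ e2 = 0 := by
    have h1 := master_m e2 e2
    rw [brskew Xm e2, lie_self] at h1
    simp only [map_neg, LinearMap.neg_apply, map_zero, LinearMap.zero_apply, Hrep02] at h1
    linarith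
  have hu0 : B ⁅e2, Xm⁆ Xm = 0 := by
    have h1 := master_m Xm e2
    rw [brskew Xm e2, lie_self] at h1
    simp only [map_neg, LinearMap.neg_apply, map_zero, LinearMap.zero_apply, Hrep01] at h1
    linarith
  have meq1 : q + B ⁅e2, Xm⁆ e1 - B ⁅e1, e2⁆ Xm = hh := by
    have h1 := master_m e1 e2
    rw [brskew Xm e2, brskew e2 e1] at h1
    rw [Hsw12 e1 e2 Xm, hH123] at h1
    simp only [map_neg, LinearMap.neg_apply] at h1
    rw [hq] at h1
    linarith
  have meq2 : B ⁅e2, Xm⁆ e1 + q + B ⁅e1, e2⁆ Xm = -hh := by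
    have h1 := master_m e2 e1
    rw [brskew Xm e1] at h1
    rw [show H ![e2, Xm, e1] = hh from by
      rw [Hsw12 e2 e1 Xm, Hsw01 e1 e2 Xm, hH123]; ring] at h1
    simp only [map_neg, LinearMap.neg_apply] at h1
    rw [hq] at h1
    linarith
  have hs0 : B ⁅e2, Xm⁆ e1 = -q := by linarith
  have hc0 : B ⁅e1, e2⁆ Xm = -hh := by linarith
  -- bracket expansions
  have br13 : ⁅e1, Xm⁆ = q • e2 := by
    have h1 := hexp ⁅e1, Xm⁆
    rw [hp0, hq, hr0] at h1
    simpa using h1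
  have br23 : ⁅e2, Xm⁆ = (-q) • e1 := by
    have h1 := hexp ⁅e2, Xm⁆
    rw [hs0, ht0, hu0] at h1
    simpa using h1
  have br12 : ⁅e1, e2⁆ = a • e1 + b • e2 + (-hh) • Xm := by
    have h1 := hexp ⁅e1, e2⁆
    rw [ha, hb, hc0] at h1
    simpa using h1
  have br31 : ⁅Xm, e1⁆ = -(q • e2) := by rw [brskew Xm e1, br13]
  have br32 : ⁅Xm, e2⁆ = q • e1 := by rw [brskew Xm e2, br23]; simp
  have br21 : ⁅e2, e1⁆ = -(a • e1 + b • e2 + (-hh) • Xm) := by rw [brskew e2 e1, br12]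
  -- Jacobi identity consequences
  have jac1 : b * q = 0 := by
    have h1 : B (⁅e1, ⁅e2, Xm⁆⁆ + ⁅e2, ⁅Xm, e1⁆⁆ + ⁅Xm, ⁅e1, e2⁆⁆) e1 = 0 := by
      rw [lie_jacobi]; simp
    simp only [br23, br31, br12, br32, lie_add, lie_smul, lie_neg, lie_self, smul_zero,
      neg_zero, zero_add, add_zero, smul_neg, map_add, map_smul, map_neg, LinearMap.add_apply,
      LinearMap.smul_apply, LinearMap.neg_apply, map_zero, LinearMap.zero_apply, smul_eq_mul,
      o11, o12, o13, o21, o22, o23, o31, o32, hXm] at h1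
    linarith
  have jac2 : a * q = 0 := by
    have h1 : B (⁅e1, ⁅e2, Xm⁆⁆ + ⁅e2, ⁅Xm, e1⁆⁆ + ⁅Xm, ⁅e1, e2⁆⁆) e2 = 0 := by
      rw [lie_jacobi]; simp
    simp only [br23, br31, br12, br32, lie_add, lie_smul, lie_neg, lie_self, smul_zero,
      neg_zero, zero_add, add_zero, smul_neg, map_add, map_smul, map_neg, LinearMap.add_apply,
      LinearMap.smul_apply, LinearMap.neg_apply, map_zero, LinearMap.zero_apply, smul_eq_mul,
      o11, o12, o13, o21, o22, o23, o31, o32, hXm] at h1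
    linarith
  -- Xp coordinates
  obtain ⟨al, hal⟩ : ∃ t : ℝ, B Xp e1 = t := ⟨_, rfl⟩
  obtain ⟨be, hbe⟩ : ∃ t : ℝ, B Xp e2 = t := ⟨_, rfl⟩
  obtain ⟨ga, hga⟩ : ∃ t : ℝ, B Xp Xm = t := ⟨_, rfl⟩
  have expXp : Xp = al • e1 + be • e2 + ga • Xm := by
    have h1 := hexp Xp; rw [hal, hbe, hga] at h1; exact h1
  have hBe1Xp : B e1 Xp = al := by rw [hBsymm, hal]
  have hBe2Xp : B e2 Xp = be := by rw [hBsymm, hbe]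
  have hBXmXp : B Xm Xp = ga := by rw [hBsymm, hga]
  have unit : al ^ 2 + be ^ 2 + ga ^ 2 = 1 := by
    have h1 := hXp
    nth_rewrite 1 [expXp] at h1
    simp only [map_add, map_smul, LinearMap.add_apply, LinearMap.smul_apply, smul_eq_mul,
      hBe1Xp, hBe2Xp, hBXmXp] at h1
    ring_nf at h1 ⊢
    linarith only [h1]
  -- Jp coordinates
  obtain ⟨j1, hj1⟩ : ∃ t : ℝ, B (Jp e2) Xm = t := ⟨_, rfl⟩
  obtain ⟨j2, hj2⟩ : ∃ t : ℝ, B (Jp Xm) e1 = t := ⟨_, rfl⟩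
  obtain ⟨j3, hj3⟩ : ∃ t : ℝ, B (Jp e1) e2 = t := ⟨_, rfl⟩
  have Jpdiag : ∀ x : 𝔤, B (Jp x) x = 0 := by
    intro x
    have h1 := hJpskew x x
    have h2 := hBsymm x (Jp x)
    linarith
  have hJ13 : B (Jp e1) Xm = -j2 := by rw [hJpskew, hBsymm, hj2]
  have hJ21 : B (Jp e2) e1 = -j3 := by rw [hJpskew, hBsymm, hj3]
  have hJ32 : B (Jp Xm) e2 = -j1 := by rw [hJpskew, hBsymm, hj1]
  have Jpe1 : Jp e1 = j3 • e2 + (-j2) • Xm := by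
    have h1 := hexp (Jp e1); rw [Jpdiag, hj3, hJ13] at h1; simpa using h1
  have Jpe2 : Jp e2 = (-j3) • e1 + j1 • Xm := by
    have h1 := hexp (Jp e2); rw [hJ21, Jpdiag, hj1] at h1; simpa using h1
  have JpXm : Jp Xm = j2 • e1 + (-j1) • e2 := by
    have h1 := hexp (Jp Xm); rw [hj2, hJ32, Jpdiag] at h1; simpa using h1
  have jrelA : be * j3 = ga * j2 := by
    have h1 : B (Jp Xp) e1 = 0 := by rw [hJpXp]; simp
    rw [expXp] at h1
    simp only [Jpe1, Jpe2, JpXm, map_add, map_smul, LinearMap.add_apply, LinearMap.smul_apply,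
      smul_eq_mul, o11, o12, o13, o21, o22, o23, o31, o32, hXm] at h1
    ring_nf at h1 ⊢
    linarith only [h1]
  have jrelB : al * j3 = ga * j1 := by
    have h1 : B (Jp Xp) e2 = 0 := by rw [hJpXp]; simp
    rw [expXp] at h1
    simp only [Jpe1, Jpe2, JpXm, map_add, map_smul, LinearMap.add_apply, LinearMap.smul_apply,
      smul_eq_mul, o11, o12, o13, o21, o22, o23, o31, o32, hXm] at h1
    ring_nf at h1 ⊢
    linarith only [h1]
  have jrelC : al * j2 = be * j1 := by
    have h1 : B (Jp Xp) Xm = 0 := by rw [hJpXp]; simp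
    rw [expXp] at h1
    simp only [Jpe1, Jpe2, JpXm, map_add, map_smul, LinearMap.add_apply, LinearMap.smul_apply,
      smul_eq_mul, o11, o12, o13, o21, o22, o23, o31, o32, hXm] at h1
    ring_nf at h1 ⊢
    linarith only [h1]
  have norm1 : j2 ^ 2 + j3 ^ 2 = 1 - al ^ 2 := by
    have h1 : B (Jp (Jp e1)) e1 = B (-e1 + B e1 Xp • Xp) e1 := by rw [hJp2]
    rw [hBe1Xp, expXp] at h1
    simp only [Jpe1, Jpe2, JpXm, map_add, map_smul, map_neg,
      LinearMap.add_apply, LinearMap.smul_apply, LinearMap.neg_apply, smul_eq_mul,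
      o11, o12, o13, o21, o22, o23, o31, o32, hXm] at h1
    ring_nf at h1 ⊢
    linarith only [h1]
  have norm2 : j1 ^ 2 + j3 ^ 2 = 1 - be ^ 2 := by
    have h1 : B (Jp (Jp e2)) e2 = B (-e2 + B e2 Xp • Xp) e2 := by rw [hJp2]
    rw [hBe2Xp, expXp] at h1
    simp only [Jpe1, Jpe2, JpXm, map_add, map_smul, map_neg,
      LinearMap.add_apply, LinearMap.smul_apply, LinearMap.neg_apply, smul_eq_mul,
      o11, o12, o13, o21, o22, o23, o31, o32, hXm] at h1
    ring_nf at h1 ⊢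
    linarith only [h1]
  have norm3 : j1 ^ 2 + j2 ^ 2 = 1 - ga ^ 2 := by
    have h1 : B (Jp (Jp Xm)) Xm = B (-Xm + B Xm Xp • Xp) Xm := by rw [hJp2]
    rw [hBXmXp, expXp] at h1
    simp only [Jpe1, Jpe2, JpXm, map_add, map_smul, map_neg,
      LinearMap.add_apply, LinearMap.smul_apply, LinearMap.neg_apply, smul_eq_mul,
      o11, o12, o13, o21, o22, o23, o31, o32, hXm] at h1
    ring_nf at h1 ⊢
    linarith only [h1]
  -- F data
  have Frep : ∀ x : 𝔤, F ![x, x] = 0 := fun x =>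
    F.map_eq_zero_of_eq _ (show (![x, x]) 0 = (![x, x]) 1 from rfl) (by decide)
  have FsXm : Fs Xm = 0 := by
    apply hsep <;> rw [hFs] <;> exact hFXm _
  have Fse1 : Fs e1 = f • e2 := by
    have h1 := hexp (Fs e1)
    rw [show B (Fs e1) e1 = 0 from by rw [hFs]; exact Frep e1,
      show B (Fs e1) e2 = f from by rw [hFs, hf],
      show B (Fs e1) Xm = 0 from by rw [hFs, Fsw]; rw [hFXm]; ring] at h1
    simpa using h1
  have Fse2 : Fs e2 = (-f) • e1 := by
    have h1 := hexp (Fs e2)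
    rw [show B (Fs e2) e1 = -f from by rw [hFs, Fsw, hf],
      show B (Fs e2) e2 = 0 from by rw [hFs]; exact Frep e2,
      show B (Fs e2) Xm = 0 from by rw [hFs, Fsw]; rw [hFXm]; ring] at h1
    simpa using h1
  -- H values on permuted basis triples
  have Hv1 : H ![Xm, e1, e2] = hh := by
    rw [Hsw01 e1 Xm e2, Hsw12 e1 e2 Xm, hH123]; ring
  have Hv2 : H ![Xm, e2, e1] = -hh := by
    rw [Hsw01 e2 Xm e1, Hsw12 e2 e1 Xm, Hsw01 e1 e2 Xm, hH123]; ring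
  have Hv3 : H ![e2, e1, Xm] = -hh := by
    rw [Hsw01 e1 e2 Xm, hH123]
  have Hv5 : H ![e2, Xm, e1] = hh := by
    rw [Hsw12 e2 e1 Xm, Hsw01 e1 e2 Xm, hH123]; ring
  have Hv6 : H ![e1, Xm, e2] = -hh := by
    rw [Hsw12 e1 e2 Xm, hH123]
  -- the eight structure equations from master_p
  have BIG : ∀ u v : 𝔤,
      B ⁅u, Xp⁆ v - B ⁅Xp, v⁆ u + B ⁅v, u⁆ Xp = -H ![Xp, u, v] - 2 * B (Jp (Fs u)) v :=
    master_p
  have E11 : a * be = f * j3 := by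
    have h1 := BIG e1 e1
    rw [expXp] at h1
    simp only [lie_add, add_lie, lie_smul, smul_lie, lie_neg, neg_lie, lie_self,
      br12, br13, br23, br21, br31, br32, Fse1, Fse2, FsXm, map_add, map_smul, map_neg, map_zero,
      LinearMap.add_apply, LinearMap.smul_apply, LinearMap.neg_apply, LinearMap.zero_apply,
      smul_eq_mul, Jpe1, Jpe2, JpXm, Hadd, Hsmul, Hrep01, Hrep02, Hrep12,
      Hv1, Hv2, Hv3, Hv5, Hv6, hH123, o11, o12, o13, o21, o22, o23, o31, o32, hXm,
      smul_zero, zero_add, add_zero, mul_zero, zero_mul, mul_one, one_mul, neg_zero,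
      smul_neg, neg_neg] at h1
    ring_nf at h1 ⊢
    linarith only [h1]
  have E12 : a * al = hh * ga := by
    have h1 := BIG e1 e2
    rw [expXp] at h1
    simp only [lie_add, add_lie, lie_smul, smul_lie, lie_neg, neg_lie, lie_self,
      br12, br13, br23, br21, br31, br32, Fse1, Fse2, FsXm, map_add, map_smul, map_neg, map_zero,
      LinearMap.add_apply, LinearMap.smul_apply, LinearMap.neg_apply, LinearMap.zero_apply,
      smul_eq_mul, Jpe1, Jpe2, JpXm, Hadd, Hsmul, Hrep01, Hrep02, Hrep12,
      Hv1, Hv2, Hv3, Hv5, Hv6, hH123, o11, o12, o13, o21, o22, o23, o31, o32, hXm,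
      smul_zero, zero_add, add_zero, mul_zero, zero_mul, mul_one, one_mul, neg_zero,
      smul_neg, neg_neg] at h1
    ring_nf at h1 ⊢
    linarith only [h1]
  have E21 : b * be = hh * ga := by
    have h1 := BIG e2 e1
    rw [expXp] at h1
    simp only [lie_add, add_lie, lie_smul, smul_lie, lie_neg, neg_lie, lie_self,
      br12, br13, br23, br21, br31, br32, Fse1, Fse2, FsXm, map_add, map_smul, map_neg, map_zero,
      LinearMap.add_apply, LinearMap.smul_apply, LinearMap.neg_apply, LinearMap.zero_apply,
      smul_eq_mul, Jpe1, Jpe2, JpXm, Hadd, Hsmul, Hrep01, Hrep02, Hrep12,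
      Hv1, Hv2, Hv3, Hv5, Hv6, hH123, o11, o12, o13, o21, o22, o23, o31, o32, hXm,
      smul_zero, zero_add, add_zero, mul_zero, zero_mul, mul_one, one_mul, neg_zero,
      smul_neg, neg_neg] at h1
    ring_nf at h1 ⊢
    linarith only [h1]
  have E22 : b * al = -(f * j3) := by
    have h1 := BIG e2 e2
    rw [expXp] at h1
    simp only [lie_add, add_lie, lie_smul, smul_lie, lie_neg, neg_lie, lie_self,
      br12, br13, br23, br21, br31, br32, Fse1, Fse2, FsXm, map_add, map_smul, map_neg, map_zero,
      LinearMap.add_apply, LinearMap.smul_apply, LinearMap.neg_apply, LinearMap.zero_apply,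
      smul_eq_mul, Jpe1, Jpe2, JpXm, Hadd, Hsmul, Hrep01, Hrep02, Hrep12,
      Hv1, Hv2, Hv3, Hv5, Hv6, hH123, o11, o12, o13, o21, o22, o23, o31, o32, hXm,
      smul_zero, zero_add, add_zero, mul_zero, zero_mul, mul_one, one_mul, neg_zero,
      smul_neg, neg_neg] at h1
    ring_nf at h1 ⊢
    linarith only [h1]
  have E13 : f * j1 = hh * be := by
    have h1 := BIG e1 Xm
    rw [expXp] at h1
    simp only [lie_add, add_lie, lie_smul, smul_lie, lie_neg, neg_lie, lie_self,
      br12, br13, br23, br21, br31, br32, Fse1, Fse2, FsXm, map_add, map_smul, map_neg, map_zero,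
      LinearMap.add_apply, LinearMap.smul_apply, LinearMap.neg_apply, LinearMap.zero_apply,
      smul_eq_mul, Jpe1, Jpe2, JpXm, Hadd, Hsmul, Hrep01, Hrep02, Hrep12,
      Hv1, Hv2, Hv3, Hv5, Hv6, hH123, o11, o12, o13, o21, o22, o23, o31, o32, hXm,
      smul_zero, zero_add, add_zero, mul_zero, zero_mul, mul_one, one_mul, neg_zero,
      smul_neg, neg_neg] at h1
    ring_nf at h1 ⊢
    linarith only [h1]
  have E23 : f * j2 = -(hh * al) := by
    have h1 := BIG e2 Xm
    rw [expXp] at h1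
    simp only [lie_add, add_lie, lie_smul, smul_lie, lie_neg, neg_lie, lie_self,
      br12, br13, br23, br21, br31, br32, Fse1, Fse2, FsXm, map_add, map_smul, map_neg, map_zero,
      LinearMap.add_apply, LinearMap.smul_apply, LinearMap.neg_apply, LinearMap.zero_apply,
      smul_eq_mul, Jpe1, Jpe2, JpXm, Hadd, Hsmul, Hrep01, Hrep02, Hrep12,
      Hv1, Hv2, Hv3, Hv5, Hv6, hH123, o11, o12, o13, o21, o22, o23, o31, o32, hXm,
      smul_zero, zero_add, add_zero, mul_zero, zero_mul, mul_one, one_mul, neg_zero,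
      smul_neg, neg_neg] at h1
    ring_nf at h1 ⊢
    linarith only [h1]
  have E31 : q * be = 0 := by
    have h1 := BIG Xm e1
    rw [expXp] at h1
    simp only [lie_add, add_lie, lie_smul, smul_lie, lie_neg, neg_lie, lie_self,
      br12, br13, br23, br21, br31, br32, Fse1, Fse2, FsXm, map_add, map_smul, map_neg, map_zero,
      LinearMap.add_apply, LinearMap.smul_apply, LinearMap.neg_apply, LinearMap.zero_apply,
      smul_eq_mul, Jpe1, Jpe2, JpXm, Hadd, Hsmul, Hrep01, Hrep02, Hrep12,
      Hv1, Hv2, Hv3, Hv5, Hv6, hH123, o11, o12, o13, o21, o22, o23, o31, o32, hXm,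
      smul_zero, zero_add, add_zero, mul_zero, zero_mul, mul_one, one_mul, neg_zero,
      smul_neg, neg_neg] at h1
    ring_nf at h1 ⊢
    linarith only [h1]
  have E32 : q * al = 0 := by
    have h1 := BIG Xm e2
    rw [expXp] at h1
    simp only [lie_add, add_lie, lie_smul, smul_lie, lie_neg, neg_lie, lie_self,
      br12, br13, br23, br21, br31, br32, Fse1, Fse2, FsXm, map_add, map_smul, map_neg, map_zero,
      LinearMap.add_apply, LinearMap.smul_apply, LinearMap.neg_apply, LinearMap.zero_apply,
      smul_eq_mul, Jpe1, Jpe2, JpXm, Hadd, Hsmul, Hrep01, Hrep02, Hrep12,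
      Hv1, Hv2, Hv3, Hv5, Hv6, hH123, o11, o12, o13, o21, o22, o23, o31, o32, hXm,
      smul_zero, zero_add, add_zero, mul_zero, zero_mul, mul_one, one_mul, neg_zero,
      smul_neg, neg_neg] at h1
    ring_nf at h1 ⊢
    linarith only [h1]
  -- h and f vanish
  have key1 : hh * (al ^ 2 + be ^ 2) = 0 := by
    linear_combination (-be) * E13 + al * E23 + (-f) * jrelC
  have key2 : f * (al ^ 2 + be ^ 2) = 0 := by
    linear_combination j1 * E13 + j2 * E23 + (-hh) * jrelC + (-f) * norm3 + f * unit
  have hHF0 : hh = 0 ∧ f = 0 := by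
    by_cases hcase : al = 0 ∧ be = 0
    · obtain ⟨h1, h2⟩ := hcase
      have hga2 : ga ^ 2 = 1 := by linear_combination unit - al * h1 - be * h2
      have hj1 : j1 = 0 := by
        have h3 : j1 ^ 2 = 0 := by linarith only [norm3, sq_nonneg j1, sq_nonneg j2, hga2]
        exact pow_eq_zero_iff (by norm_num) |>.mp h3
      have hj2 : j2 = 0 := by
        have h3 : j2 ^ 2 = 0 := by linarith only [norm3, sq_nonneg j1, sq_nonneg j2, hga2]
        exact pow_eq_zero_iff (by norm_num) |>.mp h3
      have hga : ga ≠ 0 := by intro hg; rw [hg] at hga2; norm_num at hga2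
      have hj3 : j3 ≠ 0 := by
        intro hj; rw [hj, hj2, h1] at norm1; norm_num at norm1
      constructor
      · have h4 := E12; rw [h1, mul_zero] at h4
        exact (mul_eq_zero.mp h4.symm).resolve_right hga
      · have h4 := E11; rw [h2, mul_zero] at h4
        exact (mul_eq_zero.mp h4.symm).resolve_right hj3
    · have hpos2 : 0 < al ^ 2 + be ^ 2 := by
        rcases not_and_or.mp hcase with h | h
        · have h3 : 0 < al ^ 2 := by positivity
          linarith only [h3, sq_nonneg be]
        · have h3 : 0 < be ^ 2 := by positivity
          linarith only [h3, sq_nonneg al]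
      exact ⟨(mul_eq_zero.mp key1).resolve_right (ne_of_gt hpos2),
        (mul_eq_zero.mp key2).resolve_right (ne_of_gt hpos2)⟩
  obtain ⟨hH0, hF0⟩ := hHF0
  refine ⟨?_, ?_, ?_⟩
  · -- H = 0
    have hdet := H.eq_smul_basis_det bE
    have hzero : H ⇑bE = 0 := by rw [hbE, hH123, hH0]
    rw [hdet, hzero, zero_smul]
  · -- F = 0
    have hFse10 : Fs e1 = 0 := by rw [Fse1, hF0, zero_smul]
    have hFse20 : Fs e2 = 0 := by rw [Fse2, hF0]; simp
    have hFall : ∀ u v : 𝔤, F ![u, v] = 0 := by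
      intro u v
      rw [← hFs u v, hexp v]
      simp only [map_add, map_smul, smul_eq_mul]
      rw [show B (Fs u) e1 = 0 from by rw [hFs, Fsw e1 u, ← hFs, hFse10]; simp,
        show B (Fs u) e2 = 0 from by rw [hFs, Fsw e2 u, ← hFs, hFse20]; simp,
        show B (Fs u) Xm = 0 from by rw [hFs, Fsw Xm u, ← hFs, FsXm]; simp]
      ring
    ext v
    have hv : v = ![v 0, v 1] := by funext i; fin_cases i <;> rfl
    simp only [AlternatingMap.zero_apply]
    rw [hv]
    exact hFall _ _
  · -- classification
    have br12' : ⁅e1, e2⁆ = a • e1 + b • e2 := by rw [br12, hH0]; simp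
    have br21' : ⁅e2, e1⁆ = -(a • e1 + b • e2) := by rw [brskew e2 e1, br12']
    have Ea_al : a * al = 0 := by rw [E12, hH0, zero_mul]
    have Eb_be : b * be = 0 := by rw [E21, hH0, zero_mul]
    have Ea_be : a * be = 0 := by rw [E11, hF0, zero_mul]
    have Eb_al : b * al = 0 := by rw [E22, hF0]; ring
    by_cases hq0 : q = 0
    · by_cases hA : a = 0 ∧ b = 0
      · left
        obtain ⟨ha0, hb0⟩ := hA
        have z12 : ⁅e1, e2⁆ = 0 := by rw [br12', ha0, hb0]; simp
        have z13 : ⁅e1, Xm⁆ = 0 := by rw [br13, hq0]; simp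
        have z23 : ⁅e2, Xm⁆ = 0 := by rw [br23, hq0]; simp
        have z21 : ⁅e2, e1⁆ = 0 := by rw [brskew e2 e1, z12, neg_zero]
        have z31 : ⁅Xm, e1⁆ = 0 := by rw [brskew Xm e1, z13, neg_zero]
        have z32 : ⁅Xm, e2⁆ = 0 := by rw [brskew Xm e2, z23, neg_zero]
        intro u v
        rw [hexp u, hexp v]
        simp only [lie_add, add_lie, lie_smul, smul_lie, lie_self,
          z12, z13, z23, z21, z31, z32, smul_zero, add_zero, zero_add]
      · right; right
        have hal0 : al = 0 ∧ be = 0 := by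
          rcases not_and_or.mp hA with h | h
          · exact ⟨(mul_eq_zero.mp Ea_al).resolve_left h,
              (mul_eq_zero.mp Ea_be).resolve_left h⟩
          · exact ⟨(mul_eq_zero.mp Eb_al).resolve_left h,
              (mul_eq_zero.mp Eb_be).resolve_left h⟩
        obtain ⟨hal0', hbe0'⟩ := hal0
        have hga2 : ga ^ 2 = 1 := by linear_combination unit - al * hal0' - be * hbe0'
        have hXpg : Xp = ga • Xm := by rw [expXp, hal0', hbe0']; simp
        have z13 : ⁅e1, Xm⁆ = 0 := by rw [br13, hq0]; simp
        have z23 : ⁅e2, Xm⁆ = 0 := by rw [br23, hq0]; simp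
        have hr2pos : 0 < a ^ 2 + b ^ 2 := by
          rcases not_and_or.mp hA with h | h
          · have h3 : 0 < a ^ 2 := by positivity
            linarith only [h3, sq_nonneg b]
          · have h3 : 0 < b ^ 2 := by positivity
            linarith only [h3, sq_nonneg a]
        obtain ⟨r, hr⟩ : ∃ t : ℝ, t = Real.sqrt (a ^ 2 + b ^ 2) := ⟨_, rfl⟩
        have hrpos : 0 < r := hr ▸ Real.sqrt_pos.mpr hr2pos
        have hrne : r ≠ 0 := ne_of_gt hrpos
        have hr2 : r ^ 2 = a ^ 2 + b ^ 2 := hr ▸ Real.sq_sqrt hr2pos.le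
        obtain ⟨u0, hu0⟩ : ∃ v : 𝔤, v = (b / r ^ 2) • e1 + (-(a / r ^ 2)) • e2 := ⟨_, rfl⟩
        obtain ⟨u1, hu1⟩ : ∃ v : 𝔤, v = (a / r) • e1 + (b / r) • e2 := ⟨_, rfl⟩
        have P00 : B u0 u0 = 1 / r ^ 2 := by
          rw [hu0]
          simp only [map_add, map_smul, map_neg, LinearMap.add_apply, LinearMap.smul_apply,
            LinearMap.neg_apply, smul_eq_mul, o11, o12, o21, o22]
          field_simp
          linear_combination -hr2
        have P01 : B u0 u1 = 0 := by
          rw [hu0, hu1]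
          simp only [map_add, map_smul, map_neg, LinearMap.add_apply, LinearMap.smul_apply,
            LinearMap.neg_apply, smul_eq_mul, o11, o12, o21, o22]
          field_simp
          ring
        have P11 : B u1 u1 = 1 := by
          rw [hu1]
          simp only [map_add, map_smul, LinearMap.add_apply, LinearMap.smul_apply,
            smul_eq_mul, o11, o12, o21, o22]
          field_simp
          linear_combination -hr2
        have P02 : B u0 Xm = 0 := by
          rw [hu0]
          simp only [map_add, map_smul, map_neg, LinearMap.add_apply, LinearMap.smul_apply,
            LinearMap.neg_apply, smul_eq_mul, o13, o23]
          ring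
        have P12 : B u1 Xm = 0 := by
          rw [hu1]
          simp only [map_add, map_smul, LinearMap.add_apply, LinearMap.smul_apply,
            smul_eq_mul, o13, o23]
          ring
        have P10 : B u1 u0 = 0 := by rw [hBsymm]; exact P01
        have P20 : B Xm u0 = 0 := by rw [hBsymm]; exact P02
        have P21 : B Xm u1 = 0 := by rw [hBsymm]; exact P12
        have brw01 : ⁅u0, u1⁆ = u1 := by
          rw [hu0, hu1]
          simp only [lie_add, add_lie, lie_smul, smul_lie, lie_self, smul_zero, zero_add,
            add_zero, br12', br21', smul_neg, smul_add, smul_smul]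
          match_scalars
          · field_simp
            linear_combination (-a) * hr2
          · field_simp
            linear_combination (-b) * hr2
        have brw02 : ⁅u0, Xm⁆ = 0 := by
          rw [hu0]
          simp only [add_lie, smul_lie, z13, z23, smul_zero, add_zero]
        have brw12 : ⁅u1, Xm⁆ = 0 := by
          rw [hu1]
          simp only [add_lie, smul_lie, z13, z23, smul_zero, add_zero]
        have hliW : LinearIndependent ℝ ![u0, u1, Xm] := by
          apply hli
          · intro i j hij
            fin_cases i <;> fin_cases j <;>
              first
                | exact absurd rfl hij
                | exact P01 | exact P02 | exact P10 | exact P12 | exact P20 | exact P21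
          · intro i
            fin_cases i
            · exact show B u0 u0 ≠ 0 by rw [P00]; positivity
            · exact show B u1 u1 ≠ 0 by rw [P11]; norm_num
            · exact show B Xm Xm ≠ 0 by rw [hXm]; norm_num
        obtain ⟨w, hwdef⟩ : ∃ w : Module.Basis (Fin 3) ℝ 𝔤,
            w = basisOfLinearIndependentOfCardEqFinrank hliW hcard := ⟨_, rfl⟩
        have hw : ⇑w = ![u0, u1, Xm] := by
          rw [hwdef]; exact coe_basisOfLinearIndependentOfCardEqFinrank _ _
        have hw0 : w 0 = u0 := by rw [hw]; rfl
        have hw1 : w 1 = u1 := by rw [hw]; rfl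
        have hw2 : w 2 = Xm := by rw [hw]; rfl
        refine ⟨w, r, hrne, ?_, ?_, ?_, ?_, ?_, ?_, ?_, ?_, ?_⟩
        · intro i j hij
          fin_cases i <;> fin_cases j <;> rw [hw] <;>
            first
              | exact absurd rfl hij
              | exact P01 | exact P02 | exact P10 | exact P12 | exact P20 | exact P21
        · rw [hw0]; exact P00
        · rw [hw1]; exact P11
        · rw [hw2]; exact hXm
        · rw [hw0, hw1]; exact brw01
        · rw [hw0, hw2]; exact brw02
        · rw [hw1, hw2]; exact brw12
        · exact hw2.symm
        · have h5 : (ga - 1) * (ga + 1) = 0 := by linear_combination hga2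
          rcases mul_eq_zero.mp h5 with h6 | h6
          · left; rw [hXpg, hw2, show ga = 1 by linarith only [h6], one_smul]
          · right; rw [hXpg, hw2, show ga = -1 by linarith only [h6], neg_smul, one_smul]
    · right; left
      have hal0 : al = 0 := (mul_eq_zero.mp E32).resolve_left hq0
      have hbe0 : be = 0 := (mul_eq_zero.mp E31).resolve_left hq0
      have ha0 : a = 0 := (mul_eq_zero.mp jac2).resolve_right hq0
      have hb0 : b = 0 := (mul_eq_zero.mp jac1).resolve_right hq0
      have hga2 : ga ^ 2 = 1 := by linear_combination unit - al * hal0 - be * hbe0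
      have hXpg : Xp = ga • Xm := by rw [expXp, hal0, hbe0]; simp
      have hliW : LinearIndependent ℝ ![e2, Xm, -e1] := by
        apply hli
        · intro i j hij
          fin_cases i <;> fin_cases j <;>
            first
              | exact absurd rfl hij
              | exact o23
              | exact o32
              | exact show B e2 (-e1) = 0 by rw [map_neg, o21, neg_zero]
              | exact show B Xm (-e1) = 0 by rw [map_neg, o31, neg_zero]
              | exact show B (-e1) e2 = 0 by rw [map_neg, LinearMap.neg_apply, o12, neg_zero]
              | exact show B (-e1) Xm = 0 by rw [map_neg, LinearMap.neg_apply, o13, neg_zero]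
        · intro i
          fin_cases i
          · exact show B e2 e2 ≠ 0 by rw [o22]; norm_num
          · exact show B Xm Xm ≠ 0 by rw [hXm]; norm_num
          · exact show B (-e1) (-e1) ≠ 0 by
              simp only [map_neg, LinearMap.neg_apply, neg_neg, o11]; norm_num
      obtain ⟨w, hwdef⟩ : ∃ w : Module.Basis (Fin 3) ℝ 𝔤,
          w = basisOfLinearIndependentOfCardEqFinrank hliW hcard := ⟨_, rfl⟩
      have hw : ⇑w = ![e2, Xm, -e1] := by
        rw [hwdef]; exact coe_basisOfLinearIndependentOfCardEqFinrank _ _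
      have hw0 : w 0 = e2 := by rw [hw]; rfl
      have hw1 : w 1 = Xm := by rw [hw]; rfl
      have hw2 : w 2 = -e1 := by rw [hw]; rfl
      refine ⟨w, q, hq0, ?_, ?_, ?_, ?_, ?_, ?_, ?_⟩
      · intro i j hij
        fin_cases i <;> fin_cases j <;> rw [hw] <;>
          first
            | exact absurd rfl hij
            | exact o23
            | exact o32
            | exact show B e2 (-e1) = 0 by rw [map_neg, o21, neg_zero]
            | exact show B Xm (-e1) = 0 by rw [map_neg, o31, neg_zero]
            | exact show B (-e1) e2 = 0 by rw [map_neg, LinearMap.neg_apply, o12, neg_zero]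
            | exact show B (-e1) Xm = 0 by rw [map_neg, LinearMap.neg_apply, o13, neg_zero]
      · intro i
        fin_cases i <;> rw [hw]
        · exact o22
        · exact hXm
        · exact show B (-e1) (-e1) = 1 by
            simp only [map_neg, LinearMap.neg_apply, neg_neg, o11]
      · rw [hw0, hw1, hw2, br23, neg_smul, smul_neg]
      · rw [hw1, hw2, hw0, lie_neg, br31, neg_neg]
      · rw [hw2, hw0, neg_lie, br12', ha0, hb0]; simp
      · exact hw1.symm
      · have h5 : (ga - 1) * (ga + 1) = 0 := by linear_combination hga2
        rcases mul_eq_zero.mp h5 with h6 | h6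
        · left; rw [hXpg, hw1, show ga = 1 by linarith only [h6], one_smul]
        · right; rw [hXpg, hw1, show ga = -1 by linarith only [h6], neg_smul, one_smul]
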